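/- For the time-varying AR(2) equation, the k-step-ahead forecast error y_t − E[y_t | 𝔽_{t-k}] equals Σ_{i=0}^{k-1} ξ_{t,i}·ε_{t-i}, and hence its conditional variance equals Σ_{i=0}^{k-1} ξ_{t,i}²·σ_{t-i}², where σ_τ² = E[ε_τ²]. -/

import Mathlib

open MeasureTheory Filter Finset

theorem xi_dual_aux (φ₁ φ₂ : ℤ → ℝ) (ξ : ℤ → ℤ → ℝ)
    (hξ0 : ∀ t, ξ t 0 = 1) (hξm1 : ∀ t, ξ t (-1) = 0)
    (hξrec : ∀ t i : ℤ, 1 ≤ i → ξ t i = φ₁ t * ξ (t - 1) (i - 1) + φ₂ t * ξ (t - 2) (i - 2)) :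
    ∀ n : ℕ, ∀ t : ℤ,
      ξ t ((n : ℤ) + 1) = φ₁ (t - n) * ξ t n + φ₂ (t - n + 1) * ξ t ((n : ℤ) - 1) := by
  intro n
  induction n using Nat.strong_induction_on with
  | _ n IH =>
    match n with
    | 0 =>
      intro t
      have h1 := hξrec t 1 le_rfl
      norm_num at h1 ⊢
      simp only [hξ0, hξm1, mul_zero, mul_one, add_zero] at h1 ⊢
      exact h1
    | 1 =>
      intro t
      have h2 := hξrec t 2 (by norm_num)
      have h1 := hξrec (t - 1) 1 le_rfl
      have h1' := hξrec t 1 le_rfl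
      norm_num at h2 h1 h1' ⊢
      simp only [hξ0, hξm1, mul_zero, mul_one, add_zero] at h2 h1 h1' ⊢
      rw [h2, h1, h1']
      ring
    | (m + 2) =>
      intro t
      have hA := hξrec t ((m : ℤ) + 3) (by omega)
      have hB := IH (m + 1) (by omega) (t - 1)
      have hC := IH m (by omega) (t - 2)
      have hD := hξrec t ((m : ℤ) + 2) (by omega)
      have hE := hξrec t ((m : ℤ) + 1) (by omega)
      push_cast at hA hB hC hD hE ⊢
      rw [show (m:ℤ) + 3 - 1 = m + 1 + 1 by ring, show (m:ℤ) + 3 - 2 = m + 1 by ring] at hA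
      rw [show (m:ℤ) + 2 - 1 = m + 1 by ring, show (m:ℤ) + 2 - 2 = m by ring] at hD
      rw [show (m:ℤ) + 1 - 1 = m by ring, show (m:ℤ) + 1 - 2 = m - 1 by ring] at hE
      rw [show t - 1 - ((m:ℤ) + 1) = t - (m + 2) by ring] at hB
      rw [show t - (↑m + 2) + 1 = t - (m + 1) by ring] at hB ⊢
      rw [show (m:ℤ) + 1 - 1 = m by ring] at hB
      rw [show t - 2 - (m:ℤ) = t - (m + 2) by ring] at hC
      rw [show t - ((m:ℤ) + 2) + 1 = t - (m + 1) by ring] at hC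
      rw [show (m:ℤ) + 2 + 1 = m + 3 by ring, show (m:ℤ) + 2 - 1 = m + 1 by ring]
      rw [hA, hB, hC, hD, hE]
      ring

/-- For the time-varying AR(2) model with martingale-difference errors, the
`k`-step-ahead forecast error `y_t − E[y_t | 𝔽_{t-k}]` equals
`Σ_{i=0}^{k-1} ξ_{t,i}·ε_{t-i}` a.s., and its variance (mean square error)
equals `Σ_{i=0}^{k-1} ξ_{t,i}²·σ_{t-i}²`. -/
theorem forecast_error_tvar2
    {Ω : Type*} {m : MeasurableSpace Ω} {μ : Measure Ω} [IsProbabilityMeasure μ]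
    (𝔽 : Filtration ℤ m)
    (ε y : ℤ → Ω → ℝ) (φ₀ φ₁ φ₂ : ℤ → ℝ) (σ2 : ℤ → ℝ) (ξ : ℤ → ℤ → ℝ)
    (hξ0 : ∀ t, ξ t 0 = 1) (hξm1 : ∀ t, ξ t (-1) = 0)
    (hξrec : ∀ t i : ℤ, 1 ≤ i → ξ t i = φ₁ t * ξ (t - 1) (i - 1) + φ₂ t * ξ (t - 2) (i - 2))
    (hεL2 : ∀ τ, MemLp (ε τ) 2 μ)
    (hεadapted : ∀ τ, StronglyMeasurable[𝔽 τ] (ε τ))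
    (hεmds : ∀ τ, μ[ε τ | 𝔽 (τ - 1)] =ᵐ[μ] 0)
    (hεmean : ∀ τ, ∫ ω, ε τ ω ∂μ = 0)
    (hεuncorr : ∀ s τ : ℤ, s ≠ τ → ∫ ω, ε s ω * ε τ ω ∂μ = 0)
    (hσ : ∀ τ, σ2 τ = ∫ ω, (ε τ ω) ^ 2 ∂μ)
    (hy : ∀ τ, ∀ ω, y τ ω = φ₀ τ + φ₁ τ * y (τ - 1) ω + φ₂ τ * y (τ - 2) ω + ε τ ω)
    (hyint : ∀ τ, Integrable (y τ) μ)
    (t : ℤ) (k : ℕ) (hk : 1 ≤ k)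
    (hymeas : StronglyMeasurable[𝔽 (t - (k : ℤ))] (y (t - (k : ℤ))))
    (hymeas' : StronglyMeasurable[𝔽 (t - (k : ℤ))] (y (t - (k : ℤ) - 1))) :
    (y t - μ[y t | 𝔽 (t - (k : ℤ))]
        =ᵐ[μ] fun ω => ∑ i ∈ Finset.range k, ξ t i * ε (t - (i : ℤ)) ω) ∧
    ∫ ω, (∑ i ∈ Finset.range k, ξ t i * ε (t - (i : ℤ)) ω) ^ 2 ∂μ
      = ∑ i ∈ Finset.range k, (ξ t i) ^ 2 * σ2 (t - (i : ℤ)) := by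
  have hξ1 : ∀ s : ℤ, ξ s 1 = φ₁ s := by
    intro s
    have h1 := hξrec s 1 le_rfl
    norm_num at h1
    simpa [hξ0, hξm1] using h1
  -- pointwise representation
  have rep : ∀ n : ℕ, 1 ≤ n → ∀ ω, y t ω =
      (∑ i ∈ Finset.range n, ξ t i * φ₀ (t - (i : ℤ)))
      + ξ t (n : ℤ) * y (t - (n : ℤ)) ω
      + φ₂ (t - (n : ℤ) + 1) * ξ t ((n : ℤ) - 1) * y (t - (n : ℤ) - 1) ω
      + ∑ i ∈ Finset.range n, ξ t i * ε (t - (i : ℤ)) ω := by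
    intro n hn
    induction n, hn using Nat.le_induction with
    | base =>
      intro ω
      rw [Finset.sum_range_one, Finset.sum_range_one]
      push_cast
      norm_num [hξ0, hξ1]
      rw [show t - 1 - 1 = t - 2 by ring]
      exact hy t ω
    | succ n hn IH =>
      intro ω
      have h := IH ω
      have hsub := hy (t - (n : ℤ)) ω
      have hdual := xi_dual_aux φ₁ φ₂ ξ hξ0 hξm1 hξrec n t
      rw [Finset.sum_range_succ, Finset.sum_range_succ]
      push_cast
      rw [show t - ((n : ℤ) + 1) = t - n - 1 by ring]
      rw [show t - (n : ℤ) - 1 + 1 = t - n by ring,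
          show t - (n : ℤ) - 1 - 1 = t - n - 2 by ring,
          show ((n : ℤ) + 1) - 1 = n by ring]
      linear_combination h + ξ t (n : ℤ) * hsub - y (t - (n : ℤ) - 1) ω * hdual
  have hm' : 𝔽 (t - (k : ℤ)) ≤ m := 𝔽.le _
  have hεint : ∀ τ, Integrable (ε τ) μ := fun τ => (hεL2 τ).integrable one_le_two
  set S : Ω → ℝ := fun ω => ∑ i ∈ Finset.range k, ξ t i * ε (t - (i : ℤ)) ω with hSdef
  have hSint : Integrable S μ :=
    integrable_finset_sum _ (fun i _ => (hεint _).const_mul _)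
  set C : ℝ := ∑ i ∈ Finset.range k, ξ t i * φ₀ (t - (i : ℤ)) with hCdef
  set a : ℝ := ξ t (k : ℤ) with hadef
  set b : ℝ := φ₂ (t - (k : ℤ) + 1) * ξ t ((k : ℤ) - 1) with hbdef
  set g : Ω → ℝ := fun ω => C + a * y (t - (k : ℤ)) ω + b * y (t - (k : ℤ) - 1) ω with hgdef
  have hgmeas : StronglyMeasurable[𝔽 (t - (k : ℤ))] g :=
    (stronglyMeasurable_const.add (hymeas.const_mul a)).add (hymeas'.const_mul b)
  have hgint : Integrable g μ :=
    ((integrable_const C).add ((hyint _).const_mul a)).add ((hyint _).const_mul b)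
  have hrepk : ∀ ω, y t ω = g ω + S ω := by
    intro ω
    have := rep k hk ω
    simp only [hgdef, hSdef, hCdef, hadef, hbdef]
    linarith [this]
  have hyeq : y t = g + S := funext fun ω => hrepk ω
  -- conditional expectation of each noise term is zero
  have hmds' : ∀ i ∈ Finset.range k, μ[ε (t - (i : ℤ)) | 𝔽 (t - (k : ℤ))] =ᵐ[μ] 0 := by
    intro i hi
    have hik : (i : ℤ) < (k : ℤ) := by exact_mod_cast Finset.mem_range.mp hi
    have hle : 𝔽 (t - (k : ℤ)) ≤ 𝔽 (t - (i : ℤ) - 1) := 𝔽.mono (by omega)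
    calc μ[ε (t - (i : ℤ)) | 𝔽 (t - (k : ℤ))]
        =ᵐ[μ] μ[μ[ε (t - (i : ℤ)) | 𝔽 (t - (i : ℤ) - 1)] | 𝔽 (t - (k : ℤ))] :=
          (condExp_condExp_of_le hle (𝔽.le _)).symm
      _ =ᵐ[μ] μ[(0 : Ω → ℝ) | 𝔽 (t - (k : ℤ))] := condExp_congr_ae (hεmds (t - (i : ℤ)))
      _ = 0 := condExp_zero
  have hS0 : μ[S | 𝔽 (t - (k : ℤ))] =ᵐ[μ] 0 := by
    have hsum := condExp_finset_sum (μ := μ) (m := 𝔽 (t - (k : ℤ)))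
      (f := fun (i : ℕ) (ω : Ω) => ξ t i * ε (t - (i : ℤ)) ω) (s := Finset.range k)
      (fun i _ => (hεint (t - (i : ℤ))).const_mul (ξ t i))
    have hterm : ∀ i ∈ Finset.range k,
        (μ[(fun ω => ξ t i * ε (t - (i : ℤ)) ω) | 𝔽 (t - (k : ℤ))]) =ᵐ[μ] (0 : Ω → ℝ) := by
      intro i hi
      have hsmul : (fun ω => ξ t i * ε (t - (i : ℤ)) ω) = (ξ t i) • ε (t - (i : ℤ)) := rfl
      rw [hsmul]
      refine (condExp_smul (ξ t i) (ε (t - (i : ℤ))) (𝔽 (t - (k : ℤ)))).trans ?_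
      filter_upwards [hmds' i hi] with ω hω
      simp [hω]
    have hSfun : S = ∑ i ∈ Finset.range k, (fun ω => ξ t i * ε (t - (i : ℤ)) ω) := by
      funext ω
      simp [hSdef]
    rw [hSfun]
    refine hsum.trans ?_
    refine (eventuallyEq_sum hterm).trans ?_
    simp
  have hcond : μ[y t | 𝔽 (t - (k : ℤ))] =ᵐ[μ] g := by
    rw [hyeq]
    calc μ[g + S | 𝔽 (t - (k : ℤ))]
        =ᵐ[μ] μ[g | 𝔽 (t - (k : ℤ))] + μ[S | 𝔽 (t - (k : ℤ))] := condExp_add hgint hSint (𝔽 (t - (k : ℤ)))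
      _ =ᵐ[μ] g + 0 := EventuallyEq.add
          (by rw [condExp_of_stronglyMeasurable hm' hgmeas hgint]) hS0
      _ = g := by rw [add_zero]
  constructor
  · filter_upwards [hcond] with ω hω
    simp only [Pi.sub_apply]
    rw [hω]
    have := hrepk ω
    simp only [hSdef] at this ⊢
    linarith
  · -- variance computation
    have hmul : ∀ s τ : ℤ, Integrable (fun ω => ε s ω * ε τ ω) μ := by
      intro s τ
      have h : MemLp ((ε s) • (ε τ)) 1 μ :=
        (hεL2 τ).smul (hεL2 s) (hpqr := ⟨by simp [one_div, ENNReal.inv_two_add_inv_two]⟩)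
      exact memLp_one_iff_integrable.mp h
    have key : ∀ ω, (∑ i ∈ Finset.range k, ξ t i * ε (t - (i : ℤ)) ω) ^ 2
        = ∑ i ∈ Finset.range k, ∑ j ∈ Finset.range k,
            (ξ t i * ξ t j) * (ε (t - (i : ℤ)) ω * ε (t - (j : ℤ)) ω) := by
      intro ω
      rw [sq, Finset.sum_mul_sum]
      exact Finset.sum_congr rfl fun i _ => Finset.sum_congr rfl fun j _ => by ring
    calc ∫ ω, (∑ i ∈ Finset.range k, ξ t i * ε (t - (i : ℤ)) ω) ^ 2 ∂μ
        = ∫ ω, ∑ i ∈ Finset.range k, ∑ j ∈ Finset.range k,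
            (ξ t i * ξ t j) * (ε (t - (i : ℤ)) ω * ε (t - (j : ℤ)) ω) ∂μ := by
          exact integral_congr_ae (Eventually.of_forall key)
      _ = ∑ i ∈ Finset.range k, ∑ j ∈ Finset.range k,
            (ξ t i * ξ t j) * ∫ ω, ε (t - (i : ℤ)) ω * ε (t - (j : ℤ)) ω ∂μ := by
          rw [integral_finset_sum _
            (fun i _ => integrable_finset_sum _ (fun j _ => (hmul _ _).const_mul _))]
          exact Finset.sum_congr rfl fun i _ => by
            rw [integral_finset_sum _ (fun j _ => (hmul _ _).const_mul _)]
            exact Finset.sum_congr rfl fun j _ => integral_const_mul _ _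
      _ = ∑ i ∈ Finset.range k, (ξ t i) ^ 2 * σ2 (t - (i : ℤ)) := by
          refine Finset.sum_congr rfl fun i hi => ?_
          rw [Finset.sum_eq_single i]
          · rw [hσ (t - (i : ℤ))]
            have : ∫ ω, ε (t - (i : ℤ)) ω * ε (t - (i : ℤ)) ω ∂μ
                = ∫ ω, (ε (t - (i : ℤ)) ω) ^ 2 ∂μ :=
              integral_congr_ae (Eventually.of_forall fun ω => (sq _).symm)
            rw [this]
            ring
          · intro j hj hji
            have hne : t - (i : ℤ) ≠ t - (j : ℤ) := by
              intro hcontra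
              apply hji
              have : (j : ℤ) = (i : ℤ) := by omega
              exact_mod_cast this
            rw [hεuncorr _ _ hne, mul_zero]
          · intro hi'
            exact absurd hi hi'
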